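/- Let G⁺ be a Garside monoid with Garside element Δ, let δ ∈ D(Δ) be balanced with D(δ) = D(Δ) ∩ G⁺_δ (so G_δ is a standard parabolic subgroup). Then for x, y ∈ D(δ), if (x, y) is in left normal form in G⁺_δ (i.e., no non-trivial element of D(δ) left-divides y and right-complements x inside D(δ)), then α_L(x·y) = x in G⁺, i.e., (x, y) is also in left normal form in G⁺. -/
import Mathlib


namespace Garside

variable {M : Type*}

/-- left-divisibility -/
def LDvd [Monoid M] (a b : M) : Prop := ∃ c, b = a * c

/-- right-divisibility -/
def RDvd [Monoid M] (a b : M) : Prop := ∃ c, b = c * a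

/-- Noetherian: lengths of factorizations into non-identity factors are bounded. -/
def NoetherianM (M : Type*) [Monoid M] : Prop :=
  ∀ g : M, ∃ N : ℕ, ∀ l : List M, l.prod = g → (∀ x ∈ l, x ≠ 1) → l.length ≤ N

/-- balanced element: left divisors = right divisors -/
def Balanced [Monoid M] (δ : M) : Prop := ∀ g : M, LDvd g δ ↔ RDvd g δ

/-- the set of (left-)divisors of a (balanced) element -/
def D [Monoid M] (δ : M) : Set M := {g | LDvd g δ}

/-- atom of a monoid -/
def IsAtomM [Monoid M] (h : M) : Prop := h ≠ 1 ∧ ∀ g k : M, h = g * k → g = 1 ∨ k = 1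

/-- support of a balanced element: atoms dividing it -/
def suppM [Monoid M] (δ : M) : Set M := {s | IsAtomM s ∧ LDvd s δ}

/-- A Garside monoid structure on a cancellative monoid. -/
structure GarsideMonoid (M : Type*) [CancelMonoid M] where
  noeth : NoetherianM M
  wedgeL : M → M → M
  wedgeL_dvd_left : ∀ a b, LDvd (wedgeL a b) a
  wedgeL_dvd_right : ∀ a b, LDvd (wedgeL a b) b
  le_wedgeL : ∀ a b c, LDvd c a → LDvd c b → LDvd c (wedgeL a b)
  veeL : M → M → M
  dvd_veeL_left : ∀ a b, LDvd a (veeL a b)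
  dvd_veeL_right : ∀ a b, LDvd b (veeL a b)
  veeL_le : ∀ a b c, LDvd a c → LDvd b c → LDvd (veeL a b) c
  wedgeR : M → M → M
  wedgeR_dvd_left : ∀ a b, RDvd (wedgeR a b) a
  wedgeR_dvd_right : ∀ a b, RDvd (wedgeR a b) b
  le_wedgeR : ∀ a b c, RDvd c a → RDvd c b → RDvd c (wedgeR a b)
  veeR : M → M → M
  dvd_veeR_left : ∀ a b, RDvd a (veeR a b)
  dvd_veeR_right : ∀ a b, RDvd b (veeR a b)
  veeR_le : ∀ a b c, RDvd a c → RDvd b c → RDvd (veeR a b) c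
  Δ : M
  balanced : Balanced Δ
  finD : (D Δ).Finite
  gen : Submonoid.closure (D Δ) = ⊤

variable [CancelMonoid M]

/-- head function (left) -/
def GarsideMonoid.αL (G : GarsideMonoid M) (w : M) : M := G.wedgeL w G.Δ

/-- head function (right) -/
def GarsideMonoid.αR (G : GarsideMonoid M) (w : M) : M := G.wedgeR w G.Δ

/-- Garside submonoid: a sublattice submonoid closed under the head maps. -/
def IsGarsideSubmonoid (G : GarsideMonoid M) (H : Submonoid M) : Prop :=
  (∀ a ∈ H, ∀ b ∈ H,
      G.wedgeL a b ∈ H ∧ G.veeL a b ∈ H ∧ G.wedgeR a b ∈ H ∧ G.veeR a b ∈ H) ∧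
  (∀ h ∈ H, G.αL h ∈ H ∧ G.αR h ∈ H)

/-- least upper bound of a set for left-divisibility -/
def IsLubL (S : Set M) (δ : M) : Prop :=
  (∀ x ∈ S, LDvd x δ) ∧ ∀ c, (∀ x ∈ S, LDvd x c) → LDvd δ c

/-- least upper bound of a set for right-divisibility -/
def IsLubR (S : Set M) (δ : M) : Prop :=
  (∀ x ∈ S, RDvd x δ) ∧ ∀ c, (∀ x ∈ S, RDvd x c) → RDvd δ c

theorem parabolic_normal_form_coincides {M : Type*} [CancelMonoid M]
    (G : GarsideMonoid M) (δ : M) (hδD : δ ∈ D G.Δ) (hbal : Balanced δ)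
    (hpar : D δ = D G.Δ ∩ (Submonoid.closure (suppM δ) : Set M))
    (x y : M) (hx : x ∈ D δ) (hy : y ∈ D δ)
    (hnf : ∀ z, z ∈ D δ → x * z ∈ D δ → LDvd (x * z) (x * y) → z = 1) :
    G.αL (x * y) = x := by
  -- x left-divides both x*y and Δ, hence x divides αL(x*y)
  have hxΔ : LDvd x G.Δ := ((hpar ▸ hx).1 : x ∈ D G.Δ)
  have hxxy : LDvd x (x * y) := ⟨y, rfl⟩
  have hxα : LDvd x (G.wedgeL (x * y) G.Δ) := G.le_wedgeL _ _ _ hxxy hxΔ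
  obtain ⟨z, hz⟩ := hxα
  -- αL divides x*y, so z divides y
  obtain ⟨c, hc⟩ := G.wedgeL_dvd_left (x * y) G.Δ
  rw [hz, mul_assoc] at hc
  have hzy : LDvd z y := ⟨c, mul_left_cancel hc⟩
  -- z divides δ
  obtain ⟨d, hd⟩ := hy
  obtain ⟨c', hc'⟩ := hzy
  have hzδ : z ∈ D δ := ⟨c' * d, by rw [hd, hc', mul_assoc]⟩
  -- x*z ∈ D Δ
  have hxzΔ : x * z ∈ D G.Δ := hz ▸ G.wedgeL_dvd_right (x * y) G.Δ
  -- x*z ∈ closure (suppM δ)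
  have hxcl : x ∈ Submonoid.closure (suppM δ) := (hpar ▸ hx).2
  have hzcl : z ∈ Submonoid.closure (suppM δ) := (hpar ▸ hzδ).2
  have hxzδ : x * z ∈ D δ := hpar ▸ ⟨hxzΔ, mul_mem hxcl hzcl⟩
  have hz1 : z = 1 := hnf z hzδ hxzδ (hz ▸ G.wedgeL_dvd_left (x * y) G.Δ)
  rw [GarsideMonoid.αL, hz, hz1, mul_one]
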